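/- Let r ≥ 1, S ⊆ Fin r, and let {A,B} and {C,D} be two bipartitions of Fin r. Let ψ_A, ψ_B, φ_C, φ_D be states of the qubits in A, B, C, D respectively, and suppose CZ_S(ψ_A ⊗ ψ_B) = φ_C ⊗ φ_D. Then either CZ_S disappears on ψ_A ⊗ ψ_B, or there exists T ⊆ S such that T is a subset of one of the sets A, B, C, D and CZ_S(ψ_A ⊗ ψ_B) = CZ_T(ψ_A ⊗ ψ_B) ≠ ψ_A ⊗ ψ_B. -/
import Mathlib


open scoped BigOperators

/-- The state space of `r` qubits: amplitudes indexed by bit strings of length `r`. -/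
abbrev QState (r : ℕ) := (Fin r → Bool) → ℂ

/-- A unit vector on qubits indexed by a finite type. -/
def UnitVecOn {α : Type*} [Fintype α] [DecidableEq α] (ψ : (α → Bool) → ℂ) : Prop :=
  ∑ x, ‖ψ x‖ ^ 2 = 1

/-- The C-SIGN gate on the qubits in `S`: flips the sign of the amplitude exactly
when all bits in `S` are `1`. -/
noncomputable def czGate {r : ℕ} (S : Finset (Fin r)) (ψ : QState r) : QState r :=
  fun x => if ∀ i ∈ S, x i = true then -ψ x else ψ x

/-- `{A, B}` is a bipartition of the qubits. -/
def Bipartition {r : ℕ} (A B : Finset (Fin r)) : Prop :=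
  A.Nonempty ∧ B.Nonempty ∧ Disjoint A B ∧ A ∪ B = Finset.univ

/-- The tensor product of a state on the qubits in `A` with a state on the qubits
in `B` (for `{A,B}` a bipartition of the register). -/
noncomputable def tens {r : ℕ} (A B : Finset (Fin r))
    (ψA : ({i : Fin r // i ∈ A} → Bool) → ℂ) (ψB : ({i : Fin r // i ∈ B} → Bool) → ℂ) :
    QState r :=
  fun x => ψA (fun i => x i.1) * ψB (fun i => x i.1)

namespace CZAux

def mixS {r : ℕ} (E : Finset (Fin r)) (x y : Fin r → Bool) : Fin r → Bool :=
  fun k => if k ∈ E then x k else y k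

lemma tens_mix {r : ℕ} (C D : Finset (Fin r)) (hd : Disjoint C D)
    (v : ({i : Fin r // i ∈ C} → Bool) → ℂ) (w : ({i : Fin r // i ∈ D} → Bool) → ℂ)
    (x y : Fin r → Bool) :
    tens C D v w (mixS C x y) * tens C D v w (mixS C y x)
      = tens C D v w x * tens C D v w y := by
  have hC : ∀ z z' : Fin r → Bool,
      (fun i : {i : Fin r // i ∈ C} => mixS C z z' i.1) = fun i => z i.1 := by
    intro z z'; funext i; simp [mixS, i.2]
  have hD : ∀ z z' : Fin r → Bool,
      (fun i : {i : Fin r // i ∈ D} => mixS C z z' i.1) = fun i => z' i.1 := by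
    intro z z'; funext i
    have : i.1 ∉ C := Finset.disjoint_right.mp hd i.2
    simp [mixS, this]
  simp only [tens, hC, hD]
  ring

def P01 {r : ℕ} (A C : Finset (Fin r)) (e p : Fin r → Bool) : Fin r → Bool :=
  mixS C (mixS A p e) e

def P10 {r : ℕ} (A C : Finset (Fin r)) (e q : Fin r → Bool) : Fin r → Bool :=
  mixS C e (mixS A e q)

def P00 {r : ℕ} (A C : Finset (Fin r)) (e p q : Fin r → Bool) : Fin r → Bool :=
  mixS C (P01 A C e p) (P10 A C e q)

lemma M1 {r : ℕ} (A C : Finset (Fin r)) (e p q : Fin r → Bool) :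
    mixS C e (P00 A C e p q) = P10 A C e q := by
  funext k; by_cases hA : k ∈ A <;> by_cases hC : k ∈ C <;>
    simp [mixS, P00, P01, P10, hA, hC]

lemma M2 {r : ℕ} (A C : Finset (Fin r)) (e p q : Fin r → Bool) :
    mixS C (P00 A C e p q) e = P01 A C e p := by
  funext k; by_cases hA : k ∈ A <;> by_cases hC : k ∈ C <;>
    simp [mixS, P00, P01, P10, hA, hC]

lemma M3 {r : ℕ} (A C : Finset (Fin r)) (e p q : Fin r → Bool) :
    mixS A e (P00 A C e p q) = P10 A C e q := by
  funext k; by_cases hA : k ∈ A <;> by_cases hC : k ∈ C <;>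
    simp [mixS, P00, P01, P10, hA, hC]

lemma M4 {r : ℕ} (A C : Finset (Fin r)) (e p q : Fin r → Bool) :
    mixS A (P00 A C e p q) e = P01 A C e p := by
  funext k; by_cases hA : k ∈ A <;> by_cases hC : k ∈ C <;>
    simp [mixS, P00, P01, P10, hA, hC]

lemma core {r : ℕ} (S A B C D : Finset (Fin r))
    (hAB : Disjoint A B) (hCD : Disjoint C D)
    (ψA : ({i : Fin r // i ∈ A} → Bool) → ℂ) (ψB : ({i : Fin r // i ∈ B} → Bool) → ℂ)
    (φC : ({i : Fin r // i ∈ C} → Bool) → ℂ) (φD : ({i : Fin r // i ∈ D} → Bool) → ℂ)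
    (h : czGate S (tens A B ψA ψB) = tens C D φC φD)
    (e p q : Fin r → Bool)
    (hue : tens A B ψA ψB e ≠ 0) (hup : tens A B ψA ψB p ≠ 0)
    (huq : tens A B ψA ψB q ≠ 0)
    (he : ∀ i ∈ S, e i = true)
    (kp : Fin r) (hkpS : kp ∈ S) (hkpA : kp ∈ A) (hkpC : kp ∈ C) (hp : p kp = false)
    (kq : Fin r) (hkqS : kq ∈ S) (hkqB : kq ∈ B) (hkqD : kq ∈ D) (hq : q kq = false) :
    False := by
  set u := tens A B ψA ψB with hu
  set Φ := czGate S u with hΦ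
  have hΦabs : ∀ x, Φ x ≠ 0 ↔ u x ≠ 0 := by
    intro x; simp only [hΦ, czGate]; split <;> simp
  have uMix : ∀ x y, u (mixS A x y) * u (mixS A y x) = u x * u y :=
    tens_mix A B hAB ψA ψB
  have ΦMix : ∀ x y, Φ (mixS C x y) * Φ (mixS C y x) = Φ x * Φ y := by
    intro x y
    have : Φ = tens C D φC φD := h
    rw [this]; exact tens_mix C D hCD φC φD x y
  -- abbreviations
  have hkqC : kq ∉ C := Finset.disjoint_right.mp hCD hkqD
  have hkqA : kq ∉ A := Finset.disjoint_right.mp hAB hkqB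
  -- sign facts
  have hΦe : Φ e = -u e := by simp only [hΦ, czGate]; exact if_pos he
  have hsP01 : ¬ (∀ i ∈ S, P01 A C e p i = true) := by
    intro hh
    have := hh kp hkpS
    simp [P01, mixS, hkpC, hkpA, hp] at this
  have hsP10 : ¬ (∀ i ∈ S, P10 A C e q i = true) := by
    intro hh
    have := hh kq hkqS
    simp [P10, mixS, hkqC, hkqA, hq] at this
  have hsP00 : ¬ (∀ i ∈ S, P00 A C e p q i = true) := by
    intro hh
    have := hh kp hkpS
    simp [P00, P01, mixS, hkpC, hkpA, hp] at this
  have hΦP01 : Φ (P01 A C e p) = u (P01 A C e p) := by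
    simp only [hΦ, czGate]; exact if_neg hsP01
  have hΦP10 : Φ (P10 A C e q) = u (P10 A C e q) := by
    simp only [hΦ, czGate]; exact if_neg hsP10
  have hΦP00 : Φ (P00 A C e p q) = u (P00 A C e p q) := by
    simp only [hΦ, czGate]; exact if_neg hsP00
  -- nonvanishing chain
  have hum1 : u (mixS A p e) ≠ 0 :=
    left_ne_zero_of_mul (a := u (mixS A p e)) (b := u (mixS A e p))
      (by rw [uMix p e]; exact mul_ne_zero hup hue)
  have hum2 : u (mixS A e q) ≠ 0 :=
    right_ne_zero_of_mul (a := u (mixS A q e)) (b := u (mixS A e q))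
      (by rw [uMix q e]; exact mul_ne_zero huq hue)
  have hΦP01ne : Φ (P01 A C e p) ≠ 0 := by
    have hm : Φ (mixS C (mixS A p e) e) * Φ (mixS C e (mixS A p e)) ≠ 0 := by
      rw [ΦMix (mixS A p e) e]
      exact mul_ne_zero ((hΦabs _).mpr hum1) ((hΦabs _).mpr hue)
    exact left_ne_zero_of_mul hm
  have hΦP10ne : Φ (P10 A C e q) ≠ 0 := by
    have hm : Φ (mixS C e (mixS A e q)) * Φ (mixS C (mixS A e q) e) ≠ 0 := by
      rw [ΦMix e (mixS A e q)]
      exact mul_ne_zero ((hΦabs _).mpr hue) ((hΦabs _).mpr hum2)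
    exact left_ne_zero_of_mul hm
  have hΦP00ne : Φ (P00 A C e p q) ≠ 0 := by
    have hm : Φ (mixS C (P01 A C e p) (P10 A C e q)) * Φ (mixS C (P10 A C e q) (P01 A C e p)) ≠ 0 := by
      rw [ΦMix (P01 A C e p) (P10 A C e q)]
      exact mul_ne_zero hΦP01ne hΦP10ne
    exact left_ne_zero_of_mul hm
  have huP00 : u (P00 A C e p q) ≠ 0 := (hΦabs _).mp hΦP00ne
  -- the two 2x2 identities
  have E1 : Φ (P10 A C e q) * Φ (P01 A C e p) = Φ e * Φ (P00 A C e p q) := by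
    have := ΦMix e (P00 A C e p q)
    rwa [M1, M2] at this
  have E2 : u (P10 A C e q) * u (P01 A C e p) = u e * u (P00 A C e p q) := by
    have := uMix e (P00 A C e p q)
    rwa [M3, M4] at this
  rw [hΦP10, hΦP01, hΦe, hΦP00] at E1
  have : u e * u (P00 A C e p q) = 0 := by linear_combination (E1 - E2) / 2
  exact mul_ne_zero hue huP00 this

lemma cz_drop {r : ℕ} (S E F : Finset (Fin r)) (u : QState r)
    (hEF : ∀ i ∈ S, i ∈ E ∨ i ∈ F)
    (hforce : ∀ x, u x ≠ 0 → ∀ i ∈ S, i ∈ E → x i = true) :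
    czGate S u = czGate (S ∩ F) u := by
  funext x
  by_cases hx : u x = 0
  · simp [czGate, hx]
  · have hiff : (∀ i ∈ S, x i = true) ↔ (∀ i ∈ S ∩ F, x i = true) := by
      constructor
      · intro hh i hi; exact hh i (Finset.mem_of_mem_inter_left hi)
      · intro hh i hi
        rcases hEF i hi with hE | hF
        · exact hforce x hx i hi hE
        · exact hh i (Finset.mem_inter.mpr ⟨hi, hF⟩)
    simp only [czGate]
    exact if_congr hiff rfl rfl

end CZAux

theorem cz_on_separable_simplifies (r : ℕ) (hr : 1 ≤ r) (S : Finset (Fin r))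
    (A B C D : Finset (Fin r)) (hAB : Bipartition A B) (hCD : Bipartition C D)
    (ψA : ({i : Fin r // i ∈ A} → Bool) → ℂ) (hψA : UnitVecOn ψA)
    (ψB : ({i : Fin r // i ∈ B} → Bool) → ℂ) (hψB : UnitVecOn ψB)
    (φC : ({i : Fin r // i ∈ C} → Bool) → ℂ) (hφC : UnitVecOn φC)
    (φD : ({i : Fin r // i ∈ D} → Bool) → ℂ) (hφD : UnitVecOn φD)
    (h : czGate S (tens A B ψA ψB) = tens C D φC φD) :
    czGate S (tens A B ψA ψB) = tens A B ψA ψB ∨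
      ∃ T : Finset (Fin r), T ⊆ S ∧ (T ⊆ A ∨ T ⊆ B ∨ T ⊆ C ∨ T ⊆ D) ∧
        czGate S (tens A B ψA ψB) = czGate T (tens A B ψA ψB) ∧
        czGate S (tens A B ψA ψB) ≠ tens A B ψA ψB := by
  classical
  obtain ⟨-, -, hABd, hABu⟩ := hAB
  obtain ⟨-, -, hCDd, hCDu⟩ := hCD
  set u := tens A B ψA ψB with hu
  by_cases h1 : ∀ x, (∀ i ∈ S, x i = true) → u x = 0
  · left
    funext x
    by_cases hc : ∀ i ∈ S, x i = true
    · simp [czGate, hc, h1 x hc]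
    · simp [czGate, hc]
  · push_neg at h1
    obtain ⟨e, he, hue⟩ := h1
    have hne : czGate S u ≠ u := by
      intro hh
      have h2 := congrFun hh e
      simp only [czGate, if_pos he] at h2
      exact hue (by linear_combination (- h2) / 2)
    have hABmem : ∀ i : Fin r, i ∈ A ∨ i ∈ B := by
      intro i
      have : i ∈ A ∪ B := by rw [hABu]; exact Finset.mem_univ i
      exact Finset.mem_union.mp this
    have hCDmem : ∀ i : Fin r, i ∈ C ∨ i ∈ D := by
      intro i
      have : i ∈ C ∪ D := by rw [hCDu]; exact Finset.mem_univ i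
      exact Finset.mem_union.mp this
    by_cases h2 : ∀ x, u x ≠ 0 → ∀ i ∈ S, i ∈ A → x i = true
    · right
      refine ⟨S ∩ B, Finset.inter_subset_left, Or.inr (Or.inl Finset.inter_subset_right),
        ?_, hne⟩
      exact CZAux.cz_drop S A B u (fun i _ => hABmem i) h2
    by_cases h3 : ∀ x, u x ≠ 0 → ∀ i ∈ S, i ∈ B → x i = true
    · right
      refine ⟨S ∩ A, Finset.inter_subset_left, Or.inl Finset.inter_subset_right, ?_, hne⟩
      exact CZAux.cz_drop S B A u (fun i _ => (hABmem i).symm) h3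
    by_cases h4 : ∀ x, u x ≠ 0 → ∀ i ∈ S, i ∈ C → x i = true
    · right
      refine ⟨S ∩ D, Finset.inter_subset_left,
        Or.inr (Or.inr (Or.inr Finset.inter_subset_right)), ?_, hne⟩
      exact CZAux.cz_drop S C D u (fun i _ => hCDmem i) h4
    by_cases h5 : ∀ x, u x ≠ 0 → ∀ i ∈ S, i ∈ D → x i = true
    · right
      refine ⟨S ∩ C, Finset.inter_subset_left,
        Or.inr (Or.inr (Or.inl Finset.inter_subset_right)), ?_, hne⟩
      exact CZAux.cz_drop S D C u (fun i _ => (hCDmem i).symm) h5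
    · exfalso
      push_neg at h2 h3 h4 h5
      -- fail witnesses in blocks
      have FACAD : (∃ p, u p ≠ 0 ∧ ∃ k, k ∈ S ∧ k ∈ A ∧ k ∈ C ∧ p k = false) ∨
          (∃ p, u p ≠ 0 ∧ ∃ k, k ∈ S ∧ k ∈ A ∧ k ∈ D ∧ p k = false) := by
        obtain ⟨x0, hx0, k, hkS, hkA, hk⟩ := h2
        have hkf : x0 k = false := by simpa using hk
        rcases hCDmem k with hC | hD
        · exact Or.inl ⟨x0, hx0, k, hkS, hkA, hC, hkf⟩
        · exact Or.inr ⟨x0, hx0, k, hkS, hkA, hD, hkf⟩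
      have FBCBD : (∃ p, u p ≠ 0 ∧ ∃ k, k ∈ S ∧ k ∈ B ∧ k ∈ C ∧ p k = false) ∨
          (∃ p, u p ≠ 0 ∧ ∃ k, k ∈ S ∧ k ∈ B ∧ k ∈ D ∧ p k = false) := by
        obtain ⟨x0, hx0, k, hkS, hkB, hk⟩ := h3
        have hkf : x0 k = false := by simpa using hk
        rcases hCDmem k with hC | hD
        · exact Or.inl ⟨x0, hx0, k, hkS, hkB, hC, hkf⟩
        · exact Or.inr ⟨x0, hx0, k, hkS, hkB, hD, hkf⟩
      have FACBC : (∃ p, u p ≠ 0 ∧ ∃ k, k ∈ S ∧ k ∈ A ∧ k ∈ C ∧ p k = false) ∨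
          (∃ p, u p ≠ 0 ∧ ∃ k, k ∈ S ∧ k ∈ B ∧ k ∈ C ∧ p k = false) := by
        obtain ⟨x0, hx0, k, hkS, hkC, hk⟩ := h4
        have hkf : x0 k = false := by simpa using hk
        rcases hABmem k with hA | hB
        · exact Or.inl ⟨x0, hx0, k, hkS, hA, hkC, hkf⟩
        · exact Or.inr ⟨x0, hx0, k, hkS, hB, hkC, hkf⟩
      have FADBD : (∃ p, u p ≠ 0 ∧ ∃ k, k ∈ S ∧ k ∈ A ∧ k ∈ D ∧ p k = false) ∨
          (∃ p, u p ≠ 0 ∧ ∃ k, k ∈ S ∧ k ∈ B ∧ k ∈ D ∧ p k = false) := by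
        obtain ⟨x0, hx0, k, hkS, hkD, hk⟩ := h5
        have hkf : x0 k = false := by simpa using hk
        rcases hABmem k with hA | hB
        · exact Or.inl ⟨x0, hx0, k, hkS, hA, hkD, hkf⟩
        · exact Or.inr ⟨x0, hx0, k, hkS, hB, hkD, hkf⟩
      have h' : czGate S u = tens D C φD φC := by
        rw [hu, h]; funext x; exact mul_comm _ _
      have caseI : (∃ p, u p ≠ 0 ∧ ∃ k, k ∈ S ∧ k ∈ A ∧ k ∈ C ∧ p k = false) →
          (∃ p, u p ≠ 0 ∧ ∃ k, k ∈ S ∧ k ∈ B ∧ k ∈ D ∧ p k = false) → False := by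
        rintro ⟨p, hup, kp, hkpS, hkpA, hkpC, hp⟩ ⟨q, huq, kq, hkqS, hkqB, hkqD, hq⟩
        exact CZAux.core S A B C D hABd hCDd ψA ψB φC φD h e p q hue hup huq he
          kp hkpS hkpA hkpC hp kq hkqS hkqB hkqD hq
      have caseII : (∃ p, u p ≠ 0 ∧ ∃ k, k ∈ S ∧ k ∈ A ∧ k ∈ D ∧ p k = false) →
          (∃ p, u p ≠ 0 ∧ ∃ k, k ∈ S ∧ k ∈ B ∧ k ∈ C ∧ p k = false) → False := by
        rintro ⟨p, hup, kp, hkpS, hkpA, hkpD, hp⟩ ⟨q, huq, kq, hkqS, hkqB, hkqC, hq⟩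
        exact CZAux.core S A B D C hABd hCDd.symm ψA ψB φD φC h' e p q hue hup huq he
          kp hkpS hkpA hkpD hp kq hkqS hkqB hkqC hq
      rcases FACAD with hac | had
      · rcases FBCBD with hbc | hbd
        · rcases FADBD with had | hbd
          · exact caseII had hbc
          · exact caseI hac hbd
        · exact caseI hac hbd
      · rcases FBCBD with hbc | hbd
        · exact caseII had hbc
        · rcases FACBC with hac | hbc
          · exact caseI hac hbd
          · exact caseII had hbc
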